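/- Let G be a finite simple graph, and for each nonnegative integer k let V_k denote the set of vertices of G of degree k. Then G is the unique labeled realization of its neighborhood degree list (i.e., every simple graph H on the same vertex set with NDL_H(v) = NDL_G(v) for all vertices v satisfies H = G) if and only if both of the following hold: (a) for every k, the induced subgraph G[V_k] is a threshold graph; (b) for every pair of distinct values k and ℓ, the bipartite graph G[V_k, V_ℓ] is a difference graph. -/

import Mathlib

/-- The degree of a vertex: the number of its neighbors. -/
noncomputable def deg {V : Type*} (G : SimpleGraph V) (v : V) : ℕ :=
  (G.neighborSet v).ncard

/-- The neighborhood degree list of a vertex `v`: the multiset of the degrees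
(in `G`) of the neighbors of `v`. -/
noncomputable def NDL {V : Type*} [Fintype V] (G : SimpleGraph V) (v : V) : Multiset ℕ :=
  ((G.neighborSet v).toFinite.toFinset).val.map (deg G)

/-- The subgraph of `G` consisting precisely of the edges of `G` joining `s` to `t`. -/
def crossGraph {V : Type*} (G : SimpleGraph V) (s t : Set V) : SimpleGraph V where
  Adj u w := G.Adj u w ∧ ((u ∈ s ∧ w ∈ t) ∨ (u ∈ t ∧ w ∈ s))
  symm := ⟨fun u w h => ⟨h.1.symm, by tauto⟩⟩
  loopless := ⟨fun v h => G.loopless.irrefl v h.1⟩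

/-- A graph is a threshold graph if there are a real threshold `t` and real vertex
weights such that two distinct vertices are adjacent iff the sum of their weights
is at least `t`. -/
def IsThreshold {V : Type*} (G : SimpleGraph V) : Prop :=
  ∃ (t : ℝ) (w : V → ℝ), ∀ u v : V, u ≠ v → (G.Adj u v ↔ t ≤ w u + w v)

/-- A graph is a difference graph if there are a real threshold `t` and real vertex
weights, each of absolute value at most `t`, such that two distinct vertices are
adjacent iff the absolute value of the difference of their weights is at least `t`. -/
def IsDifference {V : Type*} (H : SimpleGraph V) : Prop :=
  ∃ (t : ℝ) (w : V → ℝ), (∀ v, |w v| ≤ t) ∧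
    ∀ u v : V, u ≠ v → (H.Adj u v ↔ t ≤ |w u - w v|)

attribute [local instance] Classical.propDecidable

namespace NDLWork

variable {V : Type*}

section FT
variable [Fintype V]

/-- The neighborhood of `v` as the finset used in `NDL`. -/
noncomputable def nb (G : SimpleGraph V) (v : V) : Finset V :=
  (G.neighborSet v).toFinite.toFinset

lemma mem_nb {G : SimpleGraph V} {v x : V} : x ∈ nb G v ↔ G.Adj v x := by
  simp [nb, Set.Finite.mem_toFinset]

lemma deg_eq_card_nb (G : SimpleGraph V) (v : V) : deg G v = (nb G v).card :=
  Set.ncard_eq_toFinset_card _ (G.neighborSet v).toFinite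

lemma NDL_eq (G : SimpleGraph V) (v : V) : NDL G v = (nb G v).val.map (deg G) := rfl

lemma deg_eq_of_NDL_eq {G H : SimpleGraph V} (h : ∀ v, NDL H v = NDL G v) (v : V) :
    deg H v = deg G v := by
  have hv := congrArg Multiset.card (h v)
  rw [NDL_eq, NDL_eq, Multiset.card_map, Multiset.card_map] at hv
  rw [deg_eq_card_nb, deg_eq_card_nb]
  exact hv

lemma count_filter_eq_of_NDL_eq {G H : SimpleGraph V} (h : ∀ v, NDL H v = NDL G v)
    (v : V) (k : ℕ) :
    ((nb H v).filter (fun x => deg G x = k)).card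
      = ((nb G v).filter (fun x => deg G x = k)).card := by
  have hd : ∀ x, deg H x = deg G x := deg_eq_of_NDL_eq h
  have hc := congrArg (Multiset.count k) (h v)
  rw [NDL_eq, NDL_eq, Multiset.count_map, Multiset.count_map] at hc
  have h1 : ∀ (X : SimpleGraph V), (hh : ∀ x, deg X x = deg G x) →
      Multiset.card (Multiset.filter (fun a => k = deg X a) (nb X v).val)
        = ((nb X v).filter (fun x => deg G x = k)).card := by
    intro X hh
    rw [Finset.card, Finset.filter_val]
    congr 1
    apply Multiset.filter_congr
    intro x _
    constructor
    · intro hx; rw [← hh x, hx]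
    · intro hx; rw [hh x]; omega
  rw [h1 H hd, h1 G (fun _ => rfl)] at hc
  exact hc


/-- Key counting lemma: if `G`-adjacency between `U` and `W` is given by a linear
threshold on weights, and `H` has the same `U`-`W` degree counts as `G`, then
`H` and `G` agree on pairs from `U × W`. -/
lemma lemB (G H : SimpleGraph V) (U W : Finset V) (t : ℝ) (w : V → ℝ)
    (hGt : ∀ u ∈ U, ∀ v ∈ W, u ≠ v → (G.Adj u v ↔ t ≤ w u + w v))
    (hU : ∀ u ∈ U, (W.filter (H.Adj u)).card = (W.filter (G.Adj u)).card)
    (hW : ∀ v ∈ W, (U.filter (fun u => H.Adj u v)).card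
        = (U.filter (fun u => G.Adj u v)).card) :
    ∀ u ∈ U, ∀ v ∈ W, u ≠ v → (H.Adj u v ↔ G.Adj u v) := by
  classical
  -- strictification
  set P : Finset (V × V) :=
    (U ×ˢ W).filter (fun p => p.1 ≠ p.2 ∧ ¬ G.Adj p.1 p.2) with hP
  set m : ℝ := if h : P.Nonempty then P.sup' h (fun p => w p.1 + w p.2) else t - 1 with hm
  have hmt : m < t := by
    rw [hm]
    split_ifs with h
    · rw [Finset.sup'_lt_iff]
      rintro ⟨u, v⟩ hp
      rw [hP, Finset.mem_filter, Finset.mem_product] at hp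
      have := hGt u hp.1.1 v hp.1.2 hp.2.1
      by_contra hc
      exact hp.2.2 (this.mpr (le_of_not_gt hc))
    · linarith
  set t' : ℝ := (m + t) / 2 with ht'
  have hmt' : m < t' := by rw [ht']; linarith
  have ht't : t' < t := by rw [ht']; linarith
  have hub : ∀ u ∈ U, ∀ v ∈ W, u ≠ v → ¬ G.Adj u v → w u + w v ≤ m := by
    intro u hu v hv huv hna
    have hmem : (u, v) ∈ P := by
      rw [hP, Finset.mem_filter, Finset.mem_product]
      exact ⟨⟨hu, hv⟩, huv, hna⟩
    rw [hm]
    split_ifs with h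
    · exact Finset.le_sup' (fun p => w p.1 + w p.2) hmem
    · exact absurd ⟨_, hmem⟩ h
  have hstrict : ∀ u ∈ U, ∀ v ∈ W, u ≠ v → (G.Adj u v ↔ t' < w u + w v) := by
    intro u hu v hv huv
    constructor
    · intro ha
      have := (hGt u hu v hv huv).mp ha
      linarith
    · intro hlt
      by_contra hna
      have := hub u hu v hv huv hna
      linarith
  -- the sum argument
  set F : V → V → ℝ := fun u v => w u + w v - t' with hF
  have hsum : ∀ X : SimpleGraph V,
      (∑ u ∈ U, ∑ v ∈ W, (if X.Adj u v then F u v else 0))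
        = (∑ u ∈ U, ((W.filter (X.Adj u)).card : ℝ) * (w u - t'))
          + (∑ v ∈ W, ((U.filter (fun u => X.Adj u v)).card : ℝ) * (w v)) := by
    intro X
    have : ∀ u v, (if X.Adj u v then F u v else 0)
        = (if X.Adj u v then (w u - t') else 0) + (if X.Adj u v then w v else 0) := by
      intro u v; split_ifs with h
      · rw [hF]; ring
      · ring
    simp_rw [this, Finset.sum_add_distrib]
    congr 1
    · apply Finset.sum_congr rfl
      intro u _
      rw [← Finset.sum_filter, Finset.sum_const, nsmul_eq_mul]
    · rw [Finset.sum_comm]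
      apply Finset.sum_congr rfl
      intro v _
      rw [← Finset.sum_filter, Finset.sum_const, nsmul_eq_mul]
  have hsums_eq : (∑ u ∈ U, ∑ v ∈ W, (if H.Adj u v then F u v else 0))
      = (∑ u ∈ U, ∑ v ∈ W, (if G.Adj u v then F u v else 0)) := by
    rw [hsum H, hsum G]
    congr 1
    · apply Finset.sum_congr rfl; intro u hu; rw [hU u hu]
    · apply Finset.sum_congr rfl; intro v hv; rw [hW v hv]
  set g : V → V → ℝ := fun u v =>
    (if G.Adj u v then F u v else 0) - (if H.Adj u v then F u v else 0) with hg
  have hgnn : ∀ u ∈ U, ∀ v ∈ W, 0 ≤ g u v := by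
    intro u hu v hv
    rw [hg]
    by_cases huv : u = v
    · subst huv; simp
    by_cases hGa : G.Adj u v <;> by_cases hHa : H.Adj u v <;> simp [hGa, hHa, hF]
    · have := (hstrict u hu v hv huv).mp hGa; linarith
    · have := hub u hu v hv huv hGa
      linarith
  have hgz : ∀ u ∈ U, ∀ v ∈ W, g u v = 0 := by
    have hzero : (∑ u ∈ U, ∑ v ∈ W, g u v) = 0 := by
      simp_rw [hg, Finset.sum_sub_distrib]
      rw [hsums_eq]; ring
    intro u hu v hv
    have h1 : (∑ p ∈ U ×ˢ W, g p.1 p.2) = ∑ u ∈ U, ∑ v ∈ W, g u v :=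
      Finset.sum_product U W (fun p => g p.1 p.2)
    have h2 := (Finset.sum_eq_zero_iff_of_nonneg
      (f := fun p : V × V => g p.1 p.2) (s := U ×ˢ W) (by
      rintro ⟨a, b⟩ hab
      rw [Finset.mem_product] at hab
      exact hgnn a hab.1 b hab.2)).mp (by rw [h1, hzero]) (u, v)
      (by rw [Finset.mem_product]; exact ⟨hu, hv⟩)
    exact h2
  intro u hu v hv huv
  have hz := hgz u hu v hv
  rw [hg] at hz
  simp only at hz
  by_cases hGa : G.Adj u v <;> by_cases hHa : H.Adj u v
  · exact iff_of_true hHa hGa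
  · exfalso
    have := (hstrict u hu v hv huv).mp hGa
    rw [if_pos hGa, if_neg hHa] at hz
    have : F u v = 0 := by linarith
    rw [hF] at this; simp only at this
    have := (hstrict u hu v hv huv).mp hGa
    linarith
  · exfalso
    have hle := hub u hu v hv huv hGa
    rw [if_neg hGa, if_pos hHa] at hz
    have : F u v = 0 := by linarith
    rw [hF] at this; simp only at this
    linarith
  · exact iff_of_false hHa hGa

/-- The 2-switch of `G` along `ab, cd ↦ ad, cb`. -/
def swapGraph (G : SimpleGraph V) (a b c d : V) : SimpleGraph V where
  Adj x y := (G.Adj x y ∧ ¬(s(x,y) = s(a,b) ∨ s(x,y) = s(c,d)))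
    ∨ ((s(x,y) = s(a,d) ∨ s(x,y) = s(c,b)) ∧ x ≠ y)
  symm := by
    constructor
    intro x y h
    rw [Sym2.eq_swap (a := y)]
    rcases h with ⟨h1, h2⟩ | ⟨h1, h2⟩
    · exact Or.inl ⟨h1.symm, h2⟩
    · exact Or.inr ⟨h1, h2.symm⟩
  loopless := by
    constructor
    intro x h
    rcases h with ⟨h1, _⟩ | ⟨_, h2⟩
    · exact G.loopless.irrefl x h1
    · exact h2 rfl

lemma swap_lemma (G : SimpleGraph V) (a b c d : V)
    (hab : G.Adj a b) (hcd : G.Adj c d) (had : ¬ G.Adj a d) (hcb : ¬ G.Adj c b)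
    (hac : a ≠ c) (hadn : a ≠ d) (hbc : b ≠ c) (hbd : b ≠ d)
    (hka : deg G a = deg G c) (hkb : deg G b = deg G d) :
    ∃ H : SimpleGraph V, (∀ v, NDL H v = NDL G v) ∧ H ≠ G := by
  classical
  have habn : a ≠ b := G.ne_of_adj hab
  have hcdn : c ≠ d := G.ne_of_adj hcd
  set H := swapGraph G a b c d with hH
  have hHadj : ∀ x y, H.Adj x y ↔ ((G.Adj x y ∧ ¬(s(x,y) = s(a,b) ∨ s(x,y) = s(c,d)))
      ∨ ((s(x,y) = s(a,d) ∨ s(x,y) = s(c,b)) ∧ x ≠ y)) := fun x y => Iff.rfl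
  refine ⟨H, ?_, ?_⟩
  swap
  · intro hEq
    have : H.Adj a d := Or.inr ⟨Or.inl rfl, hadn⟩
    rw [hEq] at this
    exact had this
  -- characterizations of adjacency at the four special vertices
  have hcharA : ∀ x, H.Adj a x ↔ ((G.Adj a x ∧ x ≠ b) ∨ x = d) := by
    intro x
    rw [hHadj]
    constructor
    · rintro (⟨h1, h2⟩ | ⟨h1 | h1, h2⟩)
      · refine Or.inl ⟨h1, ?_⟩
        rintro rfl
        exact h2 (Or.inl rfl)
      · rw [Sym2.eq_iff] at h1
        rcases h1 with ⟨-, rfl⟩ | ⟨h4, -⟩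
        · exact Or.inr rfl
        · exact absurd h4 hadn
      · rw [Sym2.eq_iff] at h1
        rcases h1 with ⟨h4, -⟩ | ⟨h4, -⟩
        · exact absurd h4 hac
        · exact absurd h4 habn
    · rintro (⟨h1, h2⟩ | rfl)
      · refine Or.inl ⟨h1, ?_⟩
        rintro (h3 | h3) <;> rw [Sym2.eq_iff] at h3
        · rcases h3 with ⟨-, h4⟩ | ⟨h4, -⟩
          · exact h2 h4
          · exact habn h4
        · rcases h3 with ⟨h4, -⟩ | ⟨h4, -⟩
          · exact hac h4
          · exact hadn h4
      · exact Or.inr ⟨Or.inl rfl, hadn⟩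
  have hcharB : ∀ x, H.Adj b x ↔ ((G.Adj b x ∧ x ≠ a) ∨ x = c) := by
    intro x
    rw [hHadj]
    constructor
    · rintro (⟨h1, h2⟩ | ⟨h1 | h1, h2⟩)
      · refine Or.inl ⟨h1, ?_⟩
        rintro rfl
        exact h2 (Or.inl (by rw [Sym2.eq_swap]))
      · rw [Sym2.eq_iff] at h1
        rcases h1 with ⟨h4, -⟩ | ⟨h4, -⟩
        · exact absurd h4 (Ne.symm habn)
        · exact absurd h4 hbd
      · rw [Sym2.eq_iff] at h1
        rcases h1 with ⟨h4, -⟩ | ⟨-, rfl⟩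
        · exact absurd h4 hbc
        · exact Or.inr rfl
    · rintro (⟨h1, h2⟩ | rfl)
      · refine Or.inl ⟨h1, ?_⟩
        rintro (h3 | h3) <;> rw [Sym2.eq_iff] at h3
        · rcases h3 with ⟨h4, -⟩ | ⟨-, h4⟩
          · exact habn h4.symm
          · exact h2 h4
        · rcases h3 with ⟨h4, -⟩ | ⟨h4, -⟩
          · exact hbc h4
          · exact hbd h4
      · exact Or.inr ⟨Or.inr (by rw [Sym2.eq_swap]), hbc⟩
  have hcharC : ∀ x, H.Adj c x ↔ ((G.Adj c x ∧ x ≠ d) ∨ x = b) := by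
    intro x
    rw [hHadj]
    constructor
    · rintro (⟨h1, h2⟩ | ⟨h1 | h1, h2⟩)
      · refine Or.inl ⟨h1, ?_⟩
        rintro rfl
        exact h2 (Or.inr rfl)
      · rw [Sym2.eq_iff] at h1
        rcases h1 with ⟨h4, -⟩ | ⟨h4, -⟩
        · exact absurd h4 (Ne.symm hac)
        · exact absurd h4 hcdn
      · rw [Sym2.eq_iff] at h1
        rcases h1 with ⟨-, rfl⟩ | ⟨h4, -⟩
        · exact Or.inr rfl
        · exact absurd h4 (Ne.symm hbc)
    · rintro (⟨h1, h2⟩ | rfl)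
      · refine Or.inl ⟨h1, ?_⟩
        rintro (h3 | h3) <;> rw [Sym2.eq_iff] at h3
        · rcases h3 with ⟨h4, -⟩ | ⟨h4, -⟩
          · exact hac h4.symm
          · exact hbc h4.symm
        · rcases h3 with ⟨-, h4⟩ | ⟨h4, -⟩
          · exact h2 h4
          · exact hcdn h4
      · exact Or.inr ⟨Or.inr rfl, Ne.symm hbc⟩
  have hcharD : ∀ x, H.Adj d x ↔ ((G.Adj d x ∧ x ≠ c) ∨ x = a) := by
    intro x
    rw [hHadj]
    constructor
    · rintro (⟨h1, h2⟩ | ⟨h1 | h1, h2⟩)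
      · refine Or.inl ⟨h1, ?_⟩
        rintro rfl
        exact h2 (Or.inr (by rw [Sym2.eq_swap]))
      · rw [Sym2.eq_iff] at h1
        rcases h1 with ⟨h4, -⟩ | ⟨-, rfl⟩
        · exact absurd h4 (Ne.symm hadn)
        · exact Or.inr rfl
      · rw [Sym2.eq_iff] at h1
        rcases h1 with ⟨h4, -⟩ | ⟨h4, -⟩
        · exact absurd h4 (Ne.symm hcdn)
        · exact absurd h4 (Ne.symm hbd)
    · rintro (⟨h1, h2⟩ | rfl)
      · refine Or.inl ⟨h1, ?_⟩
        rintro (h3 | h3) <;> rw [Sym2.eq_iff] at h3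
        · rcases h3 with ⟨h4, -⟩ | ⟨h4, -⟩
          · exact hadn h4.symm
          · exact hbd h4.symm
        · rcases h3 with ⟨h4, -⟩ | ⟨-, h4⟩
          · exact hcdn h4.symm
          · exact h2 h4
      · exact Or.inr ⟨Or.inl (by rw [Sym2.eq_swap]), Ne.symm hadn⟩
  -- neighborhoods of vertices outside {a,b,c,d} are unchanged
  have hgen : ∀ v, v ≠ a → v ≠ b → v ≠ c → v ≠ d → nb H v = nb G v := by
    intro v hva hvb hvc hvd
    ext x
    rw [mem_nb, mem_nb, hHadj]
    constructor
    · rintro (⟨h1, -⟩ | ⟨h1 | h1, -⟩)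
      · exact h1
      · rw [Sym2.eq_iff] at h1
        rcases h1 with ⟨h4, -⟩ | ⟨h4, -⟩
        · exact absurd h4 hva
        · exact absurd h4 hvd
      · rw [Sym2.eq_iff] at h1
        rcases h1 with ⟨h4, -⟩ | ⟨h4, -⟩
        · exact absurd h4 hvc
        · exact absurd h4 hvb
    · intro h1
      refine Or.inl ⟨h1, ?_⟩
      rintro (h3 | h3) <;> rw [Sym2.eq_iff] at h3
      · rcases h3 with ⟨h4, -⟩ | ⟨h4, -⟩
        · exact hva h4
        · exact hvb h4
      · rcases h3 with ⟨h4, -⟩ | ⟨h4, -⟩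
        · exact hvc h4
        · exact hvd h4
  -- neighborhood finset description from a characterization
  have hnb : ∀ v p q : V, (∀ x, H.Adj v x ↔ ((G.Adj v x ∧ x ≠ p) ∨ x = q)) →
      nb H v = insert q ((nb G v).erase p) := by
    intro v p q hchar
    ext x
    rw [mem_nb, hchar x, Finset.mem_insert, Finset.mem_erase, mem_nb]
    tauto
  have hnbs : ∀ v, (nb H v = nb G v) ∨
      ∃ p q, p ≠ q ∧ G.Adj v p ∧ ¬ G.Adj v q ∧ deg G p = deg G q ∧
        nb H v = insert q ((nb G v).erase p) := by
    intro v
    by_cases hva : v = a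
    · subst hva
      exact Or.inr ⟨b, d, hbd, hab, had, hkb, hnb _ b d hcharA⟩
    by_cases hvb : v = b
    · subst hvb
      exact Or.inr ⟨a, c, hac, hab.symm, fun h => hcb h.symm, hka, hnb _ a c hcharB⟩
    by_cases hvc : v = c
    · subst hvc
      exact Or.inr ⟨d, b, Ne.symm hbd, hcd, hcb, hkb.symm, hnb _ d b hcharC⟩
    by_cases hvd : v = d
    · subst hvd
      exact Or.inr ⟨c, a, Ne.symm hac, hcd.symm, fun h => had h.symm, hka.symm, hnb _ c a hcharD⟩
    · exact Or.inl (hgen v hva hvb hvc hvd)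
  have hdeg : ∀ v, deg H v = deg G v := by
    intro v
    rw [deg_eq_card_nb, deg_eq_card_nb]
    rcases hnbs v with h | ⟨p, q, hpq, hp, hq, -, h⟩
    · rw [h]
    · rw [h]
      have hpmem : p ∈ nb G v := mem_nb.mpr hp
      have hqmem : q ∉ (nb G v).erase p := by
        intro hmem
        exact hq (mem_nb.mp (Finset.mem_of_mem_erase hmem))
      rw [Finset.card_insert_of_notMem hqmem, Finset.card_erase_of_mem hpmem]
      have : 1 ≤ (nb G v).card := Finset.card_pos.mpr ⟨p, hpmem⟩
      omega
  intro v
  rw [NDL_eq, NDL_eq]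
  have hmapc : (nb H v).val.map (deg H) = (nb H v).val.map (deg G) :=
    Multiset.map_congr rfl (fun x _ => hdeg x)
  rw [hmapc]
  rcases hnbs v with h | ⟨p, q, hpq, hp, hq, hdpq, h⟩
  · rw [h]
  · rw [h]
    have hpmem : p ∈ nb G v := mem_nb.mpr hp
    have hqmem : q ∉ (nb G v).erase p := by
      intro hmem
      exact hq (mem_nb.mp (Finset.mem_of_mem_erase hmem))
    rw [Finset.insert_val_of_notMem hqmem, Multiset.map_cons]
    have hGval : (nb G v).val = p ::ₘ ((nb G v).erase p).val := by
      conv_lhs => rw [← Finset.insert_erase hpmem]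
      rw [Finset.insert_val_of_notMem (Finset.notMem_erase p _)]
    rw [hGval, Multiset.map_cons, hdpq]

end FT

/-- No alternating four-cycle with all vertices in `S`. -/
def NoAC4 (G : SimpleGraph V) (S : Finset V) : Prop :=
  ∀ a ∈ S, ∀ b ∈ S, ∀ c ∈ S, ∀ d ∈ S, a ≠ c → a ≠ d → b ≠ c → b ≠ d →
    G.Adj a b → G.Adj c d → G.Adj a d ∨ G.Adj c b

lemma NoAC4.mono {G : SimpleGraph V} {S T : Finset V} (hST : S ⊆ T)
    (h : NoAC4 G T) : NoAC4 G S :=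
  fun a ha b hb c hc d hd => h a (hST ha) b (hST hb) c (hST hc) d (hST hd)

/-- Nestedness of neighborhoods from `NoAC4`. -/
lemma nested_of_noAC4 {G : SimpleGraph V} {S : Finset V} (h : NoAC4 G S) :
    ∀ u ∈ S, ∀ v ∈ S, u ≠ v →
      ((S.filter (G.Adj u)).erase v ⊆ (S.filter (G.Adj v)).erase u ∨
       (S.filter (G.Adj v)).erase u ⊆ (S.filter (G.Adj u)).erase v) := by
  intro u hu v hv huv
  by_contra hc
  push_neg at hc
  obtain ⟨b, hb, hb2⟩ := Finset.not_subset.mp hc.1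
  obtain ⟨d, hd, hd2⟩ := Finset.not_subset.mp hc.2
  rw [Finset.mem_erase, Finset.mem_filter] at hb hd
  obtain ⟨hbv, hbS, hub⟩ := hb
  obtain ⟨hdu, hdS, hvd⟩ := hd
  have hbu : b ≠ u := fun hEq => G.loopless.irrefl u (hEq ▸ hub)
  have hdv : d ≠ v := fun hEq => G.loopless.irrefl v (hEq ▸ hvd)
  have hbnv : ¬ G.Adj v b := by
    intro hadj
    exact hb2 (Finset.mem_erase.mpr ⟨hbu, Finset.mem_filter.mpr ⟨hbS, hadj⟩⟩)
  have hdnu : ¬ G.Adj u d := by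
    intro hadj
    exact hd2 (Finset.mem_erase.mpr ⟨hdv, Finset.mem_filter.mpr ⟨hdS, hadj⟩⟩)
  have hbd : b ≠ d := fun hEq => hbnv (hEq ▸ hvd)
  rcases h u hu b hbS v hv d hdS huv (Ne.symm hdu) hbv hbd hub hvd with
    h1 | h1
  · exact hdnu h1
  · exact hbnv h1

/-- In a graph with no alternating 4-cycle on `S`, there is a vertex of `S`
isolated in `S` or dominating in `S`. -/
lemma iso_or_dom {G : SimpleGraph V} {S : Finset V} (hS : S.Nonempty)
    (h : NoAC4 G S) :
    ∃ m ∈ S, (∀ v ∈ S, v ≠ m → ¬ G.Adj m v) ∨ (∀ v ∈ S, v ≠ m → G.Adj m v) := by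
  obtain ⟨m, hm, hmax⟩ := Finset.exists_max_image S (fun x => (S.filter (G.Adj x)).card) hS
  by_cases hdom : ∀ v ∈ S, v ≠ m → G.Adj m v
  · exact ⟨m, hm, Or.inr hdom⟩
  push_neg at hdom
  obtain ⟨v, hvS, hvm, hnadj⟩ := hdom
  -- the core contradiction: no z in S adjacent to both m and v
  have key : ∀ z ∈ S, G.Adj m z → G.Adj v z → False := by
    intro z hzS hmz hvz
    have hzm : z ≠ m := fun hEq => G.loopless.irrefl m (hEq ▸ hmz)
    have hvm' : v ≠ m := hvm
    rcases nested_of_noAC4 h z hzS m hm hzm with hsub | hsub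
    · have hvmem : v ∈ (S.filter (G.Adj z)).erase m :=
        Finset.mem_erase.mpr ⟨hvm', Finset.mem_filter.mpr ⟨hvS, hvz.symm⟩⟩
      have := Finset.mem_filter.mp (Finset.mem_of_mem_erase (hsub hvmem))
      exact hnadj this.2
    · have hzmem : z ∈ S.filter (G.Adj m) := Finset.mem_filter.mpr ⟨hzS, hmz⟩
      have hmmem : m ∈ S.filter (G.Adj z) := Finset.mem_filter.mpr ⟨hm, hmz.symm⟩
      have hcard : ((S.filter (G.Adj z)).erase m).card
          ≤ ((S.filter (G.Adj m)).erase z).card := by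
        rw [Finset.card_erase_of_mem hmmem, Finset.card_erase_of_mem hzmem]
        have h1 := hmax z hzS
        omega
      have heq := Finset.eq_of_subset_of_card_le hsub hcard
      have hvmem : v ∈ (S.filter (G.Adj z)).erase m :=
        Finset.mem_erase.mpr ⟨hvm', Finset.mem_filter.mpr ⟨hvS, hvz.symm⟩⟩
      rw [← heq] at hvmem
      have := Finset.mem_filter.mp (Finset.mem_of_mem_erase hvmem)
      exact hnadj this.2
  refine ⟨v, hvS, Or.inl ?_⟩
  intro x hxS hxv hadj
  -- x is adjacent to v; derive a contradiction
  have hxm : x ≠ m := by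
    rintro rfl
    exact hnadj hadj.symm
  rcases nested_of_noAC4 h v hvS m hm hvm with hsub | hsub
  · have hxmem : x ∈ (S.filter (G.Adj v)).erase m :=
      Finset.mem_erase.mpr ⟨hxm, Finset.mem_filter.mpr ⟨hxS, hadj⟩⟩
    have := Finset.mem_filter.mp (Finset.mem_of_mem_erase (hsub hxmem))
    exact key x hxS this.2 hadj
  · -- m has at least as many neighbors as v, and v has one, so m has one
    have hv1 : 1 ≤ (S.filter (G.Adj v)).card :=
      Finset.card_pos.mpr ⟨x, Finset.mem_filter.mpr ⟨hxS, hadj⟩⟩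
    have hm1 : 1 ≤ (S.filter (G.Adj m)).card := le_trans hv1 (hmax v hvS)
    obtain ⟨b, hb⟩ := Finset.card_pos.mp hm1
    obtain ⟨hbS, hmb⟩ := Finset.mem_filter.mp hb
    have hbv : b ≠ v := by
      rintro rfl
      exact hnadj hmb
    have hbmem : b ∈ (S.filter (G.Adj v)).erase m :=
      hsub (Finset.mem_erase.mpr ⟨hbv, hb⟩)
    have := Finset.mem_filter.mp (Finset.mem_of_mem_erase hbmem)
    exact key b hbS hmb this.2

lemma weights_of_noAC4 {G : SimpleGraph V} :
    ∀ (n : ℕ) (S : Finset V), S.card = n → NoAC4 G S →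
      ∃ (t : ℝ) (w : V → ℝ), ∀ u ∈ S, ∀ v ∈ S, u ≠ v →
        (G.Adj u v ↔ t ≤ w u + w v) := by
  intro n
  induction n with
  | zero =>
    intro S hS _
    refine ⟨1, 0, ?_⟩
    intro u hu
    rw [Finset.card_eq_zero] at hS
    simp [hS] at hu
  | succ n ih =>
    intro S hS hno
    have hne : S.Nonempty := by
      rw [← Finset.card_pos, hS]; omega
    obtain ⟨m, hm, hcase⟩ := iso_or_dom hne hno
    set S' := S.erase m with hS'
    have hcard' : S'.card = n := by
      rw [hS', Finset.card_erase_of_mem hm, hS]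
      omega
    obtain ⟨t, w, hw⟩ := ih S' hcard' (hno.mono (Finset.erase_subset m S))
    set B : ℝ := ∑ x ∈ S', |w x| with hB
    have hbound : ∀ x ∈ S', -B ≤ w x ∧ w x ≤ B := by
      intro x hx
      have h1 : |w x| ≤ B := Finset.single_le_sum (fun i _ => abs_nonneg (w i)) hx
      exact ⟨by linarith [neg_abs_le (w x)], by linarith [le_abs_self (w x)]⟩
    have hmem' : ∀ x ∈ S, x ≠ m → x ∈ S' := fun x hx hxm => Finset.mem_erase.mpr ⟨hxm, hx⟩
    rcases hcase with hiso | hdom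
    · refine ⟨t, Function.update w m (t - 1 - B), ?_⟩
      intro u hu v hv huv
      by_cases hum : u = m
      · subst hum
        have hvS' : v ∈ S' := hmem' v hv (Ne.symm huv)
        rw [Function.update_self, Function.update_of_ne (Ne.symm huv)]
        constructor
        · intro hadj
          exact absurd hadj (hiso v hv (Ne.symm huv))
        · intro hle
          exfalso
          have := (hbound v hvS').2
          linarith
      by_cases hvm : v = m
      · subst hvm
        have huS' : u ∈ S' := hmem' u hu hum
        rw [Function.update_self, Function.update_of_ne hum]
        constructor
        · intro hadj
          exact absurd hadj.symm (hiso u hu hum)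
        · intro hle
          exfalso
          have := (hbound u huS').2
          linarith
      · rw [Function.update_of_ne hum, Function.update_of_ne hvm]
        exact hw u (hmem' u hu hum) v (hmem' v hv hvm) huv
    · refine ⟨t, Function.update w m (t + 1 + B), ?_⟩
      intro u hu v hv huv
      by_cases hum : u = m
      · subst hum
        have hvS' : v ∈ S' := hmem' v hv (Ne.symm huv)
        rw [Function.update_self, Function.update_of_ne (Ne.symm huv)]
        constructor
        · intro _
          have := (hbound v hvS').1
          linarith
        · intro _
          exact hdom v hv (Ne.symm huv)
      by_cases hvm : v = m
      · subst hvm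
        have huS' : u ∈ S' := hmem' u hu hum
        rw [Function.update_self, Function.update_of_ne hum]
        constructor
        · intro _
          have := (hbound u huS').1
          linarith
        · intro _
          exact (hdom u hu hum).symm
      · rw [Function.update_of_ne hum, Function.update_of_ne hvm]
        exact hw u (hmem' u hu hum) v (hmem' v hv hvm) huv

lemma isThreshold_of_noAC4 {G : SimpleGraph V} {A : Set V} (hfin : A.Finite)
    (hno : NoAC4 G hfin.toFinset) : IsThreshold (G.induce A) := by
  obtain ⟨t, w, hw⟩ := weights_of_noAC4 hfin.toFinset.card hfin.toFinset rfl hno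
  refine ⟨t, fun z => w z.val, ?_⟩
  intro u v huv
  have hu : u.val ∈ hfin.toFinset := hfin.mem_toFinset.mpr u.2
  have hv : v.val ∈ hfin.toFinset := hfin.mem_toFinset.mpr v.2
  exact hw u.val hu v.val hv (fun h => huv (Subtype.ext h))


/-- No alternating four-cycle using two vertices from `A` and two from `B`. -/
def NoBAC4 (G : SimpleGraph V) (A B : Finset V) : Prop :=
  ∀ a ∈ A, ∀ c ∈ A, ∀ b ∈ B, ∀ d ∈ B, a ≠ c → b ≠ d →
    G.Adj a b → G.Adj c d → G.Adj a d ∨ G.Adj c b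

lemma cross_nested_of_noBAC4 {G : SimpleGraph V} {A B : Finset V}
    (hno : NoBAC4 G A B) : ∀ a ∈ A, ∀ c ∈ A,
      (B.filter (G.Adj a) ⊆ B.filter (G.Adj c) ∨
       B.filter (G.Adj c) ⊆ B.filter (G.Adj a)) := by
  intro a ha c hc
  by_cases hac : a = c
  · subst hac; exact Or.inl (le_refl _)
  by_contra hcon
  push_neg at hcon
  obtain ⟨b, hb, hb2⟩ := Finset.not_subset.mp hcon.1
  obtain ⟨d, hd, hd2⟩ := Finset.not_subset.mp hcon.2
  rw [Finset.mem_filter] at hb hd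
  have hnb : ¬ G.Adj c b := fun h => hb2 (Finset.mem_filter.mpr ⟨hb.1, h⟩)
  have hnd : ¬ G.Adj a d := fun h => hd2 (Finset.mem_filter.mpr ⟨hd.1, h⟩)
  have hbd : b ≠ d := fun h => hnb (h ▸ hd.2)
  rcases hno a ha c hc b hb.1 d hd.1 hac hbd hb.2 hd.2 with h | h
  · exact hnd h
  · exact hnb h

lemma isDifference_of_noBAC4 {G : SimpleGraph V} {A B : Set V}
    (hfA : A.Finite) (hfB : B.Finite)
    (hdisj : ∀ x, x ∈ A → x ∈ B → False)
    (hno : NoBAC4 G hfA.toFinset hfB.toFinset) :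
    IsDifference ((crossGraph G A B).induce (A ∪ B)) := by
  classical
  set Af := hfA.toFinset with hAf
  set Bf := hfB.toFinset with hBf
  set n : ℕ := Bf.card with hn
  set r : V → ℕ := fun a => (Bf.filter (G.Adj a)).card with hr
  set Nb : V → Finset V := fun b => Af.filter (fun a => G.Adj a b) with hNbd
  have hrle : ∀ a, r a ≤ n := fun a => Finset.card_le_card (Finset.filter_subset _ _)
  have hn1 : (0:ℝ) < (n:ℝ) + 1 := by positivity
  have hnn1 : ((n:ℝ)) / ((n:ℝ)+1) < 1 := by
    rw [div_lt_one hn1]; linarith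
  set tau : V → ℕ := fun b => if h : (Nb b).Nonempty then (Nb b).inf' h r else 0
    with htaud
  have htaueq : ∀ b, ∀ h : (Nb b).Nonempty, tau b = (Nb b).inf' h r := by
    intro b h; rw [htaud]; simp only [dif_pos h]
  set w : V → ℝ := fun z =>
    if z ∈ A then (r z : ℝ) / ((n:ℝ) + 1)
    else if (Nb z).Nonempty then (tau z : ℝ) / ((n:ℝ) + 1) - 1 else 0
    with hw
  have hwA : ∀ a ∈ A, w a = (r a : ℝ) / ((n:ℝ) + 1) := by
    intro a ha; rw [hw]; simp only [if_pos ha]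
  have hwArange : ∀ a ∈ A, 0 ≤ w a ∧ w a ≤ (n : ℝ) / ((n:ℝ) + 1) := by
    intro a ha
    rw [hwA a ha]
    refine ⟨div_nonneg (Nat.cast_nonneg _) (le_of_lt hn1), ?_⟩
    apply (div_le_div_iff_of_pos_right hn1).mpr
    exact_mod_cast hrle a
  have htau : ∀ b ∈ B, (Nb b).Nonempty → (1 ≤ tau b ∧ tau b ≤ n) := by
    intro b hb hne
    obtain ⟨a0, ha0, hEq⟩ := Finset.exists_mem_eq_inf' hne r
    rw [hNbd, Finset.mem_filter] at ha0
    have hb' : b ∈ Bf.filter (G.Adj a0) :=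
      Finset.mem_filter.mpr ⟨hfB.mem_toFinset.mpr hb, ha0.2⟩
    have h1 : 1 ≤ r a0 := Finset.card_pos.mpr ⟨b, hb'⟩
    rw [htaueq b hne, hEq]
    exact ⟨h1, hrle a0⟩
  have hwB : ∀ b ∈ B, (-1 < w b ∧ w b ≤ 0) := by
    intro b hb
    have hbA : b ∉ A := fun h => hdisj b h hb
    rw [hw]
    simp only [if_neg hbA]
    split_ifs with hne
    · obtain ⟨h1, h2⟩ := htau b hb hne
      constructor
      · have g0 : (1:ℝ) ≤ (tau b : ℝ) := by exact_mod_cast h1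
        have h3 : (1:ℝ)/((n:ℝ)+1) ≤ (tau b : ℝ) / ((n:ℝ)+1) := (div_le_div_iff_of_pos_right hn1).mpr g0
        have h4 : (0:ℝ) < (1:ℝ)/((n:ℝ)+1) := by rw [one_div]; exact inv_pos.mpr hn1
        linarith
      · have g0 : (tau b : ℝ) ≤ (n:ℝ) := by exact_mod_cast h2
        have h3 : (tau b : ℝ) / ((n:ℝ)+1) ≤ (n:ℝ)/((n:ℝ)+1) :=
          (div_le_div_iff_of_pos_right hn1).mpr g0
        linarith
    · norm_num
  -- the key adjacency characterization
  have hkey : ∀ a ∈ A, ∀ b ∈ B,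
      (G.Adj a b ↔ ∃ h : (Nb b).Nonempty, (Nb b).inf' h r ≤ r a) := by
    intro a ha b hb
    have haf : a ∈ Af := hfA.mem_toFinset.mpr ha
    have hbf : b ∈ Bf := hfB.mem_toFinset.mpr hb
    constructor
    · intro hadj
      have hmem : a ∈ Nb b := Finset.mem_filter.mpr ⟨haf, hadj⟩
      exact ⟨⟨a, hmem⟩, Finset.inf'_le r hmem⟩
    · rintro ⟨hne, hle⟩
      obtain ⟨a0, ha0, hEq⟩ := Finset.exists_mem_eq_inf' hne r
      rw [hNbd, Finset.mem_filter] at ha0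
      have hb0 : b ∈ Bf.filter (G.Adj a0) := Finset.mem_filter.mpr ⟨hbf, ha0.2⟩
      rcases cross_nested_of_noBAC4 hno a0 ha0.1 a haf with hsub | hsub
      · exact (Finset.mem_filter.mp (hsub hb0)).2
      · have hcard : (Bf.filter (G.Adj a0)).card ≤ (Bf.filter (G.Adj a)).card := by
          show r a0 ≤ r a
          rw [← hEq]
          exact hle
        have heq2 := Finset.eq_of_subset_of_card_le hsub hcard
        rw [← heq2] at hb0
        exact (Finset.mem_filter.mp hb0).2
  -- the main pointwise claim
  have main : ∀ a ∈ A, ∀ b ∈ B, (G.Adj a b ↔ 1 ≤ |w a - w b|) := by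
    intro a ha b hb
    have hbA : b ∉ A := fun h => hdisj b h hb
    have hwb : w b = if (Nb b).Nonempty then (tau b : ℝ) / ((n:ℝ) + 1) - 1 else 0 := by
      rw [hw]; simp only [if_neg hbA]
    by_cases hne : (Nb b).Nonempty
    · obtain ⟨h1, h2⟩ := htau b hb hne
      set ta : ℝ := (tau b : ℝ) with hta
      have hta1 : (1:ℝ) ≤ ta := by rw [hta]; exact_mod_cast h1
      have htan : ta ≤ (n:ℝ) := by rw [hta]; exact_mod_cast h2
      rw [hwb, if_pos hne, hwA a ha]
      have hra0 : (0:ℝ) ≤ (r a : ℝ) := Nat.cast_nonneg _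
      have hpos : 0 < (r a : ℝ) / ((n:ℝ)+1) - (ta / ((n:ℝ)+1) - 1) := by
        have g1 : (0:ℝ) ≤ (r a : ℝ) / ((n:ℝ)+1) := div_nonneg (Nat.cast_nonneg _) (le_of_lt hn1)
        have g2 : ta / ((n:ℝ)+1) ≤ (n:ℝ)/((n:ℝ)+1) := (div_le_div_iff_of_pos_right hn1).mpr htan
        linarith
      rw [abs_of_pos hpos]
      rw [hkey a ha b hb]
      constructor
      · rintro ⟨hne', hle⟩
        have hle' : tau b ≤ r a := by rw [htaueq b hne']; exact hle
        have g2 : ta ≤ (r a : ℝ) := by rw [hta]; exact_mod_cast hle'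
        have g3 : ta / ((n:ℝ)+1) ≤ (r a : ℝ)/((n:ℝ)+1) := (div_le_div_iff_of_pos_right hn1).mpr g2
        linarith
      · intro hge
        refine ⟨hne, ?_⟩
        have g3 : ta / ((n:ℝ)+1) ≤ (r a : ℝ)/((n:ℝ)+1) := by linarith
        have g4 : ta ≤ (r a : ℝ) := (div_le_div_iff_of_pos_right hn1).mp g3
        have g5 : tau b ≤ r a := by rw [hta] at g4; exact_mod_cast g4
        rw [← htaueq b hne]
        exact g5
    · rw [hwb, if_neg hne]
      constructor
      · intro hadj
        exact absurd ⟨a, Finset.mem_filter.mpr ⟨hfA.mem_toFinset.mpr ha, hadj⟩⟩ hne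
      · intro habs
        exfalso
        obtain ⟨g1, g2⟩ := hwArange a ha
        rw [sub_zero, abs_of_nonneg g1] at habs
        linarith
  -- assemble
  refine ⟨1, fun z => w z.val, ?_, ?_⟩
  · rintro ⟨z, hz⟩
    rcases hz with hzA | hzB
    · obtain ⟨g1, g2⟩ := hwArange z hzA
      rw [abs_le]
      constructor <;> simp only <;> linarith
    · obtain ⟨g1, g2⟩ := hwB z hzB
      rw [abs_le]
      constructor <;> simp only <;> linarith
  · rintro ⟨u, hu⟩ ⟨v, hv⟩ huv
    have huv' : u ≠ v := fun h => huv (Subtype.ext h)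
    have hLHS : ((crossGraph G A B).induce (A ∪ B)).Adj ⟨u, hu⟩ ⟨v, hv⟩ ↔
        (G.Adj u v ∧ ((u ∈ A ∧ v ∈ B) ∨ (u ∈ B ∧ v ∈ A))) := Iff.rfl
    rw [hLHS]
    simp only
    rcases hu with huA | huB <;> rcases hv with hvA | hvB
    · -- both in A
      obtain ⟨g1, g2⟩ := hwArange u huA
      obtain ⟨g3, g4⟩ := hwArange v hvA
      constructor
      · rintro ⟨-, ⟨-, h⟩ | ⟨h, -⟩⟩
        · exact absurd (hdisj v hvA h) not_false
        · exact absurd (hdisj u huA h) not_false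
      · intro habs
        exfalso
        have hlt : |w u - w v| < 1 := abs_sub_lt_iff.mpr ⟨by linarith, by linarith⟩
        linarith
    · -- u ∈ A, v ∈ B
      rw [← main u huA v hvB]
      constructor
      · exact fun h => h.1
      · exact fun h => ⟨h, Or.inl ⟨huA, hvB⟩⟩
    · -- u ∈ B, v ∈ A
      rw [abs_sub_comm, ← main v hvA u huB]
      constructor
      · exact fun h => h.1.symm
      · exact fun h => ⟨h.symm, Or.inr ⟨huB, hvA⟩⟩
    · -- both in B
      obtain ⟨g1, g2⟩ := hwB u huB
      obtain ⟨g3, g4⟩ := hwB v hvB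
      constructor
      · rintro ⟨-, ⟨h, -⟩ | ⟨-, h⟩⟩
        · exact absurd (hdisj u h huB) not_false
        · exact absurd (hdisj v h hvB) not_false
      · intro habs
        exfalso
        have : |w u - w v| < 1 := abs_sub_lt_iff.mpr ⟨by linarith, by linarith⟩
        linarith


lemma linear_of_isDifference {G : SimpleGraph V} {A B : Set V}
    (hdisj : ∀ x, x ∈ A → x ∈ B → False)
    (hd : IsDifference ((crossGraph G A B).induce (A ∪ B))) :
    ∃ (t : ℝ) (x : V → ℝ), ∀ u ∈ A, ∀ v ∈ B, (G.Adj u v ↔ t ≤ x u + x v) := by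
  classical
  obtain ⟨t, w, hbnd, hadj⟩ := hd
  set w' : V → ℝ := fun z => if h : z ∈ A ∪ B then w ⟨z, h⟩ else 0 with hw'
  have hw'A : ∀ u (hu : u ∈ A), w' u = w ⟨u, Or.inl hu⟩ := by
    intro u hu; rw [hw']; exact dif_pos (Or.inl hu)
  have hw'B : ∀ v (hv : v ∈ B), w' v = w ⟨v, Or.inr hv⟩ := by
    intro v hv; rw [hw']; exact dif_pos (Or.inr hv)
  have hcross : ∀ u, u ∈ A → ∀ v, v ∈ B → (G.Adj u v ↔ t ≤ |w' u - w' v|) := by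
    intro u hu v hv
    have huv : u ≠ v := fun h => hdisj u hu (h ▸ hv)
    have hne : (⟨u, Or.inl hu⟩ : ↥(A ∪ B)) ≠ ⟨v, Or.inr hv⟩ :=
      fun h => huv (congrArg Subtype.val h)
    have h1 := hadj ⟨u, Or.inl hu⟩ ⟨v, Or.inr hv⟩ hne
    rw [hw'A u hu, hw'B v hv]
    rw [← h1]
    constructor
    · intro h; exact ⟨h, Or.inl ⟨hu, hv⟩⟩
    · intro h; exact h.1
  have hinA : ∀ u, u ∈ A → ∀ u', u' ∈ A → u ≠ u' → |w' u - w' u'| < t := by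
    intro u hu u' hu' huu
    have hne : (⟨u, Or.inl hu⟩ : ↥(A ∪ B)) ≠ ⟨u', Or.inl hu'⟩ :=
      fun h => huu (congrArg Subtype.val h)
    have h1 := hadj ⟨u, Or.inl hu⟩ ⟨u', Or.inl hu'⟩ hne
    have hnadj : ¬ ((crossGraph G A B).induce (A ∪ B)).Adj ⟨u, Or.inl hu⟩ ⟨u', Or.inl hu'⟩ := by
      rintro ⟨-, ⟨-, h⟩ | ⟨h, -⟩⟩
      · exact hdisj u' hu' h
      · exact hdisj u hu h
    rw [h1] at hnadj
    rw [hw'A u hu, hw'A u' hu']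
    exact lt_of_not_ge hnadj
  have hinB : ∀ v, v ∈ B → ∀ v', v' ∈ B → v ≠ v' → |w' v - w' v'| < t := by
    intro v hv v' hv' hvv
    have hne : (⟨v, Or.inr hv⟩ : ↥(A ∪ B)) ≠ ⟨v', Or.inr hv'⟩ :=
      fun h => hvv (congrArg Subtype.val h)
    have h1 := hadj ⟨v, Or.inr hv⟩ ⟨v', Or.inr hv'⟩ hne
    have hnadj : ¬ ((crossGraph G A B).induce (A ∪ B)).Adj ⟨v, Or.inr hv⟩ ⟨v', Or.inr hv'⟩ := by
      rintro ⟨-, ⟨h, -⟩ | ⟨-, h⟩⟩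
      · exact hdisj v h hv
      · exact hdisj v' h hv'
    rw [h1] at hnadj
    rw [hw'B v hv, hw'B v' hv']
    exact lt_of_not_ge hnadj
  by_cases hE : ∃ u ∈ A, ∃ v ∈ B, G.Adj u v
  · obtain ⟨u0, hu0, v0, hv0, he0⟩ := hE
    by_cases ht : 0 < t
    · by_cases hs : ∀ u ∈ A, ∀ v ∈ B, G.Adj u v → t ≤ w' u - w' v
      · refine ⟨t, fun z => if z ∈ B then -(w' z) else w' z, ?_⟩
        intro u hu v hv
        have huB : u ∉ B := fun h => hdisj u hu h
        simp only [if_neg huB, if_pos hv]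
        constructor
        · intro h
          have := hs u hu v hv h
          linarith
        · intro h
          apply (hcross u hu v hv).mpr
          have : t ≤ w' u - w' v := by linarith
          exact le_trans this (le_abs_self _)
      · push_neg at hs
        obtain ⟨u1, hu1, v1, hv1, he1, hlt⟩ := hs
        have h10 : t ≤ w' v1 - w' u1 := by
          have := (hcross u1 hu1 v1 hv1).mp he1
          rcases abs_cases (w' u1 - w' v1) with ⟨hEq, -⟩ | ⟨hEq, -⟩ <;> rw [hEq] at this
          · linarith
          · linarith
        have hall : ∀ u ∈ A, ∀ v ∈ B, G.Adj u v → t ≤ w' v - w' u := by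
          intro u hu v hv he
          have habs := (hcross u hu v hv).mp he
          rcases abs_cases (w' u - w' v) with ⟨hEq, -⟩ | ⟨hEq, -⟩ <;> rw [hEq] at habs
          · exfalso
            by_cases huu : u = u1 <;> by_cases hvv : v = v1
            · subst huu; subst hvv; linarith
            · subst huu
              have := hinB v hv v1 hv1 hvv
              rw [abs_lt] at this
              linarith
            · subst hvv
              have := hinA u hu u1 hu1 huu
              rw [abs_lt] at this
              linarith
            · have g1 := hinA u hu u1 hu1 huu
              have g2 := hinB v hv v1 hv1 hvv
              rw [abs_lt] at g1 g2
              linarith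
          · linarith
        refine ⟨t, fun z => if z ∈ A then -(w' z) else w' z, ?_⟩
        intro u hu v hv
        have hvA : v ∉ A := fun h => hdisj v h hv
        simp only [if_pos hu, if_neg hvA]
        constructor
        · intro h
          have := hall u hu v hv h
          linarith
        · intro h
          apply (hcross u hu v hv).mpr
          have h2 : t ≤ w' v - w' u := by linarith
          calc t ≤ w' v - w' u := h2
            _ ≤ |w' u - w' v| := by rw [abs_sub_comm]; exact le_abs_self _
    · -- t ≤ 0 : parts are singletons
      have hA1 : ∀ u ∈ A, u = u0 := by
        intro u hu
        by_contra hne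
        have := hinA u hu u0 hu0 hne
        have := abs_nonneg (w' u - w' u0)
        linarith [le_of_not_gt ht]
      have hB1 : ∀ v ∈ B, v = v0 := by
        intro v hv
        by_contra hne
        have := hinB v hv v0 hv0 hne
        have := abs_nonneg (w' v - w' v0)
        linarith [le_of_not_gt ht]
      refine ⟨2, fun z => if z = u0 ∨ z = v0 then (1:ℝ) else 0, ?_⟩
      intro u hu v hv
      have hu' : u = u0 := hA1 u hu
      have hv' : v = v0 := hB1 v hv
      simp only [if_pos (Or.inl hu' : u = u0 ∨ u = v0), if_pos (Or.inr hv' : v = u0 ∨ v = v0)]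
      refine iff_of_true ?_ (by norm_num)
      rw [hu', hv']
      exact he0
  · push_neg at hE
    refine ⟨1, fun _ => 0, ?_⟩
    intro u hu v hv
    exact iff_of_false (hE u hu v hv) (by norm_num)


end NDLWork

open NDLWork

/-- A finite simple graph `G` is the unique labeled realization of its neighborhood
degree list iff (a) for every `k` the induced subgraph `G[V_k]` is a threshold
graph, and (b) for all distinct `k, ℓ` the bipartite graph `G[V_k, V_ℓ]` is a
difference graph. -/
theorem stmt16 {V : Type*} [Fintype V] (G : SimpleGraph V) :
    (∀ H : SimpleGraph V, (∀ v, NDL H v = NDL G v) → H = G) ↔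
      ((∀ k : ℕ, IsThreshold (G.induce {v : V | deg G v = k})) ∧
       (∀ k ℓ : ℕ, k ≠ ℓ →
          IsDifference ((crossGraph G {v : V | deg G v = k} {v : V | deg G v = ℓ}).induce
            ({v : V | deg G v = k} ∪ {v : V | deg G v = ℓ})))) := by
  classical
  constructor
  · -- uniqueness implies the structural conditions
    intro huniq
    constructor
    · intro k
      by_contra hth
      have hno : ¬ NoAC4 G (Set.toFinite {v : V | deg G v = k}).toFinset := by
        intro hno
        exact hth (isThreshold_of_noAC4 (Set.toFinite _) hno)
      rw [NoAC4] at hno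
      push_neg at hno
      obtain ⟨a, ha, b, hb, c, hc, d, hd, hac, had, hbc, hbd, hab, hcd, hnad, hncb⟩ := hno
      rw [Set.Finite.mem_toFinset] at ha hb hc hd
      have hka : deg G a = deg G c := by rw [ha, hc]
      have hkb : deg G b = deg G d := by rw [hb, hd]
      obtain ⟨H, hNDL, hne⟩ := swap_lemma G a b c d hab hcd hnad hncb hac had hbc hbd hka hkb
      exact hne (huniq H hNDL)
    · intro k l hkl
      by_contra hdiff
      have hdisj : ∀ x, x ∈ {v : V | deg G v = k} → x ∈ {v : V | deg G v = l} → False := by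
        intro x hx hy
        exact hkl (hx.symm.trans hy)
      have hno : ¬ NoBAC4 G (Set.toFinite {v : V | deg G v = k}).toFinset
          (Set.toFinite {v : V | deg G v = l}).toFinset := by
        intro hno
        exact hdiff (isDifference_of_noBAC4 (Set.toFinite _) (Set.toFinite _) hdisj hno)
      rw [NoBAC4] at hno
      push_neg at hno
      obtain ⟨a, ha, c, hc, b, hb, d, hd, hac, hbd, hab, hcd, hnad, hncb⟩ := hno
      rw [Set.Finite.mem_toFinset] at ha hb hc hd
      have hadn : a ≠ d := fun h => hdisj a ha (h ▸ hd)
      have hbcn : b ≠ c := fun h => hdisj c hc (h ▸ hb)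
      have hka : deg G a = deg G c := by rw [ha, hc]
      have hkb : deg G b = deg G d := by rw [hb, hd]
      obtain ⟨H, hNDL, hne⟩ := swap_lemma G a b c d hab hcd hnad hncb hac hadn hbcn hbd hka hkb
      exact hne (huniq H hNDL)
  · -- the structural conditions imply uniqueness
    rintro ⟨hth, hdiff⟩ H hNDL
    have hdeg := deg_eq_of_NDL_eq hNDL
    have hcount := count_filter_eq_of_NDL_eq hNDL
    -- degree class finsets
    set Vm : ℕ → Finset V := fun m => (Set.toFinite {y : V | deg G y = m}).toFinset with hVm
    have hVmem : ∀ m x, x ∈ Vm m ↔ deg G x = m := by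
      intro m x
      rw [hVm]
      exact Set.Finite.mem_toFinset _
    have e1 : ∀ (X : SimpleGraph V) (x : V) (m : ℕ),
        (Vm m).filter (X.Adj x) = (nb X x).filter (fun y => deg G y = m) := by
      intro X x m
      ext y
      rw [Finset.mem_filter, Finset.mem_filter, mem_nb, hVmem]
      tauto
    have claim : ∀ (x : V) (m : ℕ),
        ((Vm m).filter (H.Adj x)).card = ((Vm m).filter (G.Adj x)).card := by
      intro x m
      rw [e1 H, e1 G]
      exact hcount x m
    have claim2 : ∀ (y : V) (m : ℕ),
        ((Vm m).filter (fun x => H.Adj x y)).card = ((Vm m).filter (fun x => G.Adj x y)).card := by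
      intro y m
      have eH : (Vm m).filter (fun x => H.Adj x y) = (Vm m).filter (H.Adj y) := by
        ext z; rw [Finset.mem_filter, Finset.mem_filter, SimpleGraph.adj_comm]
      have eG : (Vm m).filter (fun x => G.Adj x y) = (Vm m).filter (G.Adj y) := by
        ext z; rw [Finset.mem_filter, Finset.mem_filter, SimpleGraph.adj_comm]
      rw [eH, eG]
      exact claim y m
    ext u v
    by_cases huv : u = v
    · subst huv
      simp only [SimpleGraph.irrefl]
    set k := deg G u with hk
    set l := deg G v with hl
    have hu : u ∈ Vm k := (hVmem k u).mpr rfl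
    have hv : v ∈ Vm l := (hVmem l v).mpr rfl
    by_cases hkl : k = l
    · -- same degree class: use the threshold structure
      obtain ⟨t, w, hw⟩ := hth k
      set w' : V → ℝ := fun z => if h : z ∈ {v : V | deg G v = k} then w ⟨z, h⟩ else 0 with hw'
      have hGt : ∀ x ∈ Vm k, ∀ y ∈ Vm k, x ≠ y → (G.Adj x y ↔ t ≤ w' x + w' y) := by
        intro x hx y hy hxy
        have hx' : x ∈ {v : V | deg G v = k} := (hVmem k x).mp hx
        have hy' : y ∈ {v : V | deg G v = k} := (hVmem k y).mp hy
        have hxval : w' x = w ⟨x, hx'⟩ := by rw [hw']; exact dif_pos hx'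
        have hyval : w' y = w ⟨y, hy'⟩ := by rw [hw']; exact dif_pos hy'
        rw [hxval, hyval]
        exact hw ⟨x, hx'⟩ ⟨y, hy'⟩ (fun h => hxy (congrArg Subtype.val h))
      have := lemB G H (Vm k) (Vm k) t w' hGt
        (fun x _ => claim x k) (fun y _ => claim2 y k) u hu v (hkl ▸ hv) huv
      exact this
    · -- different degree classes: use the difference structure
      obtain ⟨t, x, hx⟩ := linear_of_isDifference
        (G := G) (A := {v : V | deg G v = k}) (B := {v : V | deg G v = l})
        (fun z hz hz' => hkl (hz.symm.trans hz')) (hdiff k l hkl)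
      have hGt : ∀ a ∈ Vm k, ∀ b ∈ Vm l, a ≠ b → (G.Adj a b ↔ t ≤ x a + x b) := by
        intro a ha b hb _
        exact hx a ((hVmem k a).mp ha) b ((hVmem l b).mp hb)
      have := lemB G H (Vm k) (Vm l) t x hGt
        (fun a _ => claim a l) (fun b _ => claim2 b k) u hu v hv huv
      exact this
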